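/- For ν > 0, let f_ν(x) = Γ((ν+1)/2)/(√(νπ)·Γ(ν/2)) · (1 + x²/ν)^{−(ν+1)/2} denote the Student t density with ν degrees of freedom, where Γ is the Gamma function. Define the asymptotic relative efficiency of optimal-score generalized rank regression with respect to Wilcoxon rank regression under t_ν noise as ARE(ν) = I(f_ν) / (12·(∫_ℝ f_ν(x)² dx)²), where I(f_ν) = ∫_ℝ (f_ν′(x)/f_ν(x))² f_ν(x) dx is the Fisher information for location. Then ARE(ν) → ∞ as ν → 0⁺. -/

import Mathlib

open MeasureTheory Filter

/-- The Student t density with `ν` degrees of freedom. -/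
noncomputable def studentTDensity (ν : ℝ) (x : ℝ) : ℝ :=
  Real.Gamma ((ν + 1) / 2) / (Real.sqrt (ν * Real.pi) * Real.Gamma (ν / 2)) *
    (1 + x ^ 2 / ν) ^ (-((ν + 1) / 2))

/-- Fisher information for location of a density `f`. -/
noncomputable def fisherInfo (f : ℝ → ℝ) : ℝ :=
  ∫ x : ℝ, (deriv f x / f x) ^ 2 * f x

/-- Asymptotic relative efficiency of optimal-score GRR with respect to Wilcoxon rank
regression under Student `t_ν` noise. -/
noncomputable def ARE (ν : ℝ) : ℝ :=
  fisherInfo (studentTDensity ν) /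
    (12 * (∫ x : ℝ, (studentTDensity ν x) ^ 2) ^ 2)

namespace StudentAux

open Real

/-- The normalizing constant of the Student t density. -/
noncomputable def C (ν : ℝ) : ℝ :=
  Real.Gamma ((ν + 1) / 2) / (Real.sqrt (ν * Real.pi) * Real.Gamma (ν / 2))

lemma C_pos {ν : ℝ} (hν : 0 < ν) : 0 < C ν :=
  div_pos (Real.Gamma_pos_of_pos (by linarith))
    (mul_pos (Real.sqrt_pos.mpr (mul_pos hν Real.pi_pos)) (Real.Gamma_pos_of_pos (by linarith)))

lemma base_pos {ν : ℝ} (hν : 0 < ν) (x : ℝ) : 0 < 1 + x ^ 2 / ν := by positivity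

lemma one_le_base {ν : ℝ} (hν : 0 < ν) (x : ℝ) : 1 ≤ 1 + x ^ 2 / ν := by
  nlinarith [sq_nonneg x, div_nonneg (sq_nonneg x) hν.le]

lemma f_eq {ν : ℝ} (x : ℝ) :
    studentTDensity ν x = C ν * (1 + x ^ 2 / ν) ^ (-((ν + 1) / 2)) := rfl

lemma f_pos {ν : ℝ} (hν : 0 < ν) (x : ℝ) : 0 < studentTDensity ν x :=
  mul_pos (C_pos hν) (Real.rpow_pos_of_pos (base_pos hν x) _)

lemma base_cont {ν : ℝ} : Continuous fun x : ℝ => 1 + x ^ 2 / ν :=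
  continuous_const.add ((continuous_pow 2).div_const ν)

lemma f_cont {ν : ℝ} (hν : 0 < ν) : Continuous (studentTDensity ν) := by
  unfold studentTDensity
  exact continuous_const.mul
    (base_cont.rpow_const fun x => Or.inl (base_pos hν x).ne')

lemma f_hasDeriv {ν : ℝ} (hν : 0 < ν) (x : ℝ) :
    HasDerivAt (studentTDensity ν)
      (C ν * (2 * x / ν * -((ν + 1) / 2) * (1 + x ^ 2 / ν) ^ (-((ν + 1) / 2) - 1))) x := by
  have h1 : HasDerivAt (fun x : ℝ => 1 + x ^ 2 / ν) (2 * x / ν) x := by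
    simpa using ((hasDerivAt_pow 2 x).div_const ν).const_add 1
  have h2 := h1.rpow_const (p := -((ν + 1) / 2)) (Or.inl (base_pos hν x).ne')
  have h3 := h2.const_mul (C ν)
  exact h3

lemma ratio_eq {ν : ℝ} (hν : 0 < ν) (x : ℝ) :
    deriv (studentTDensity ν) x / studentTDensity ν x = -((ν + 1) * x / (ν + x ^ 2)) := by
  have hb := base_pos hν x
  rw [(f_hasDeriv hν x).deriv, f_eq]
  rw [Real.rpow_sub hb, Real.rpow_one]
  have hC := (C_pos hν).ne'
  have hr : (1 + x ^ 2 / ν : ℝ) ^ (-((ν + 1) / 2)) ≠ 0 := (Real.rpow_pos_of_pos hb _).ne'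
  field_simp

lemma kernel_le {ν : ℝ} (hν : 0 < ν) (hν1 : ν ≤ 1) (x : ℝ) :
    (1 + x ^ 2 / ν) ^ (-((ν + 1) / 2)) ≤ 2 * (1 + ‖x‖) ^ (-(ν + 1)) := by
  have hx : (0:ℝ) < 1 + |x| := by positivity
  have hb : ((1 + |x|) ^ 2 / 2 : ℝ) ≤ 1 + x ^ 2 / ν := by
    have h1 : x ^ 2 ≤ x ^ 2 / ν := by
      rw [le_div_iff₀ hν]; nlinarith [sq_nonneg x]
    nlinarith [sq_abs x, sq_nonneg (1 - |x|)]
  have step1 : (1 + x ^ 2 / ν) ^ (-((ν + 1) / 2)) ≤ ((1 + |x|) ^ 2 / 2) ^ (-((ν + 1) / 2)) :=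
    Real.rpow_le_rpow_of_nonpos (by positivity) hb (by linarith)
  have step2 : (((1 + |x|) ^ 2 / 2 : ℝ)) ^ (-((ν + 1) / 2))
      = 2 ^ ((ν + 1) / 2) * (1 + |x|) ^ (-(ν + 1)) := by
    have e1 : ((2:ℕ):ℝ) * -((ν + 1) / 2) = -(ν + 1) := by push_cast; ring
    rw [Real.div_rpow (by positivity) (by norm_num), ← Real.rpow_natCast (1 + |x|) 2,
      ← Real.rpow_mul hx.le, e1, Real.rpow_neg (by norm_num : (0:ℝ) ≤ 2)]
    field_simp
  have step3 : (2:ℝ) ^ ((ν + 1) / 2) ≤ 2 := by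
    calc (2:ℝ) ^ ((ν + 1) / 2) ≤ 2 ^ (1:ℝ) :=
      Real.rpow_le_rpow_of_exponent_le one_le_two (by linarith)
    _ = 2 := Real.rpow_one 2
  calc (1 + x ^ 2 / ν) ^ (-((ν + 1) / 2)) ≤ 2 ^ ((ν + 1) / 2) * (1 + |x|) ^ (-(ν + 1)) := by
        rw [← step2]; exact step1
  _ ≤ 2 * (1 + ‖x‖) ^ (-(ν + 1)) := by
      rw [Real.norm_eq_abs]
      exact mul_le_mul_of_nonneg_right step3 (Real.rpow_nonneg hx.le _)

lemma f_integrable {ν : ℝ} (hν : 0 < ν) (hν1 : ν ≤ 1) :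
    Integrable (studentTDensity ν) := by
  have hdom : Integrable (fun x : ℝ => C ν * (2 * (1 + ‖x‖) ^ (-(ν + 1)))) := by
    have h := integrable_one_add_norm (E := ℝ) (μ := volume) (r := ν + 1) (by simp; linarith)
    exact (h.const_mul 2).const_mul (C ν)
  refine hdom.mono' ((f_cont hν).aestronglyMeasurable) (Filter.Eventually.of_forall fun x => ?_)
  rw [Real.norm_eq_abs, abs_of_pos (f_pos hν x), f_eq]
  have := kernel_le hν hν1 x
  have hC := (C_pos hν).le
  calc C ν * (1 + x ^ 2 / ν) ^ (-((ν + 1) / 2))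
      ≤ C ν * (2 * (1 + ‖x‖) ^ (-(ν + 1))) := by
        exact mul_le_mul_of_nonneg_left this hC

lemma f_le_C {ν : ℝ} (hν : 0 < ν) (x : ℝ) : studentTDensity ν x ≤ C ν := by
  rw [f_eq]
  calc C ν * (1 + x ^ 2 / ν) ^ (-((ν + 1) / 2)) ≤ C ν * 1 :=
        mul_le_mul_of_nonneg_left
          (Real.rpow_le_one_of_one_le_of_nonpos (one_le_base hν x) (by linarith)) (C_pos hν).le
  _ = C ν := mul_one _

lemma sq_integrable {ν : ℝ} (hν : 0 < ν) (hν1 : ν ≤ 1) :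
    Integrable (fun x => studentTDensity ν x ^ 2) := by
  refine ((f_integrable hν hν1).const_mul (C ν)).mono'
    (((f_cont hν).pow 2).aestronglyMeasurable) (Filter.Eventually.of_forall fun x => ?_)
  have h1 := (f_pos hν x).le
  rw [Real.norm_eq_abs, abs_of_nonneg (by positivity)]
  calc studentTDensity ν x ^ 2 = studentTDensity ν x * studentTDensity ν x := sq _
  _ ≤ C ν * studentTDensity ν x := mul_le_mul_of_nonneg_right (f_le_C hν x) h1

lemma deriv_f_cont {ν : ℝ} (hν : 0 < ν) : Continuous (deriv (studentTDensity ν)) := by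
  have : deriv (studentTDensity ν) = fun x =>
      C ν * (2 * x / ν * -((ν + 1) / 2) * (1 + x ^ 2 / ν) ^ (-((ν + 1) / 2) - 1)) :=
    funext fun x => (f_hasDeriv hν x).deriv
  rw [this]
  exact continuous_const.mul
    ((((continuous_const.mul continuous_id).div_const ν).mul continuous_const).mul
      (base_cont.rpow_const fun x => Or.inl (base_pos hν x).ne'))

lemma G_eq {ν : ℝ} (hν : 0 < ν) (x : ℝ) :
    (deriv (studentTDensity ν) x / studentTDensity ν x) ^ 2 * studentTDensity ν x
      = ((ν + 1) * x / (ν + x ^ 2)) ^ 2 * studentTDensity ν x := by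
  rw [ratio_eq hν, neg_sq]

lemma G_nonneg {ν : ℝ} (hν : 0 < ν) (x : ℝ) :
    0 ≤ (deriv (studentTDensity ν) x / studentTDensity ν x) ^ 2 * studentTDensity ν x :=
  mul_nonneg (sq_nonneg _) (f_pos hν x).le

lemma G_integrable {ν : ℝ} (hν : 0 < ν) (hν1 : ν ≤ 1) :
    Integrable (fun x =>
      (deriv (studentTDensity ν) x / studentTDensity ν x) ^ 2 * studentTDensity ν x) := by
  have hcont : Continuous (fun x =>
      (deriv (studentTDensity ν) x / studentTDensity ν x) ^ 2 * studentTDensity ν x) :=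
    (((deriv_f_cont hν).div (f_cont hν) fun x => (f_pos hν x).ne').pow 2).mul (f_cont hν)
  refine ((f_integrable hν hν1).const_mul ((ν + 1) ^ 2 / (4 * ν))).mono'
    hcont.aestronglyMeasurable (Filter.Eventually.of_forall fun x => ?_)
  rw [Real.norm_eq_abs, abs_of_nonneg (G_nonneg hν x), G_eq hν]
  have hfx := (f_pos hν x).le
  have hfac : ((ν + 1) * x / (ν + x ^ 2)) ^ 2 ≤ (ν + 1) ^ 2 / (4 * ν) := by
    rw [div_pow, div_le_div_iff₀ (by positivity) (by positivity)]
    nlinarith [sq_nonneg (ν - x ^ 2), sq_nonneg x, sq_nonneg ((ν + 1) * (ν - x ^ 2))]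
  exact mul_le_mul_of_nonneg_right hfac hfx

lemma fisher_lb {ν : ℝ} (hν : 0 < ν) (hν1 : ν ≤ 1) :
    1 / 25 * (C ν * (5 / ν) ^ (-((ν + 1) / 2))) ≤ fisherInfo (studentTDensity ν) := by
  have hGint := G_integrable hν hν1
  have h1 : ∫ x in Set.Icc (1:ℝ) 2,
      (deriv (studentTDensity ν) x / studentTDensity ν x) ^ 2 * studentTDensity ν x
      ≤ fisherInfo (studentTDensity ν) :=
    setIntegral_le_integral hGint (Filter.Eventually.of_forall fun x => G_nonneg hν x)
  refine le_trans ?_ h1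
  have hbound : ∀ x ∈ Set.Icc (1:ℝ) 2, 1 / 25 * (C ν * (5 / ν) ^ (-((ν + 1) / 2)))
      ≤ (deriv (studentTDensity ν) x / studentTDensity ν x) ^ 2 * studentTDensity ν x := by
    intro x hx
    obtain ⟨hx1, hx2⟩ := hx
    rw [G_eq hν]
    have hb5 : 1 + x ^ 2 / ν ≤ 5 / ν := by
      rw [le_div_iff₀ hν]
      have hexp : (1 + x ^ 2 / ν) * ν = ν + x ^ 2 := by field_simp
      have hx4 : x ^ 2 ≤ 4 := by nlinarith
      rw [hexp]; linarith
    have hf : C ν * (5 / ν) ^ (-((ν + 1) / 2)) ≤ studentTDensity ν x := by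
      rw [f_eq]
      exact mul_le_mul_of_nonneg_left
        (Real.rpow_le_rpow_of_nonpos (base_pos hν x) hb5 (by linarith)) (C_pos hν).le
    have hfac : (1:ℝ) / 25 ≤ ((ν + 1) * x / (ν + x ^ 2)) ^ 2 := by
      rw [div_pow, le_div_iff₀ (by positivity)]
      have hx2' : (1:ℝ) ≤ x ^ 2 := by nlinarith
      have hx4 : x ^ 2 ≤ 4 := by nlinarith
      have h5 : ν + x ^ 2 ≤ 5 := by linarith
      have hA : (ν + x ^ 2) ^ 2 ≤ 25 := by nlinarith
      have hB : (1:ℝ) ≤ ((ν + 1) * x) ^ 2 := by nlinarith [sq_nonneg (ν * x), mul_nonneg hν.le (sq_nonneg x)]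
      linarith
    have h5pos : (0:ℝ) < 5 / ν := by positivity
    exact mul_le_mul hfac hf
      (mul_nonneg (C_pos hν).le (Real.rpow_pos_of_pos h5pos _).le) (sq_nonneg _)
  have key := setIntegral_ge_of_const_le (μ := volume)
    (s := Set.Icc (1:ℝ) 2)
    (c := 1 / 25 * (C ν * (5 / ν) ^ (-((ν + 1) / 2)))) measurableSet_Icc
    (by rw [Real.volume_Icc]; exact ENNReal.ofReal_ne_top)
    hbound hGint.integrableOn
  have hvol : (volume (Set.Icc (1:ℝ) 2)).toReal = 1 := by
    rw [Real.volume_Icc]; norm_num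
  rw [Measure.real, hvol, one_smul] at key
  exact key

lemma sq_int_pos {ν : ℝ} (hν : 0 < ν) (hν1 : ν ≤ 1) :
    0 < ∫ x : ℝ, studentTDensity ν x ^ 2 := by
  rw [integral_pos_iff_support_of_nonneg (fun x => sq_nonneg _) (sq_integrable hν hν1)]
  have : (Function.support fun x => studentTDensity ν x ^ 2) = Set.univ := by
    ext x; simp [Function.mem_support, (f_pos hν x).ne']
  rw [this]
  simp

lemma sq_int_le {ν : ℝ} (hν : 0 < ν) (hν1 : ν ≤ 1) :
    ∫ x : ℝ, studentTDensity ν x ^ 2 ≤ C ν ^ 2 * (Real.sqrt ν * Real.pi) := by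
  have hs : (0:ℝ) < Real.sqrt ν := Real.sqrt_pos.mpr hν
  have key : ∀ x : ℝ, studentTDensity ν x ^ 2 ≤ C ν ^ 2 * (1 + (x / Real.sqrt ν) ^ 2)⁻¹ := by
    intro x
    have hb := base_pos hν x
    have hdiv : (x / Real.sqrt ν) ^ 2 = x ^ 2 / ν := by
      rw [div_pow, Real.sq_sqrt hν.le]
    rw [f_eq, mul_pow, hdiv]
    refine mul_le_mul_of_nonneg_left ?_ (by positivity)
    have e2 : ((1 + x ^ 2 / ν) ^ (-((ν + 1) / 2))) ^ 2 = (1 + x ^ 2 / ν) ^ (-(ν + 1)) := by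
      rw [← Real.rpow_natCast ((1 + x ^ 2 / ν) ^ (-((ν + 1) / 2))) 2, ← Real.rpow_mul hb.le]
      norm_num
    rw [e2]
    calc (1 + x ^ 2 / ν) ^ (-(ν + 1)) ≤ (1 + x ^ 2 / ν) ^ (-1 : ℝ) :=
          Real.rpow_le_rpow_of_exponent_le (one_le_base hν x) (by linarith)
    _ = (1 + x ^ 2 / ν)⁻¹ := by rw [Real.rpow_neg_one]
  have hint : Integrable fun x : ℝ => (1 + (x / Real.sqrt ν) ^ 2)⁻¹ :=
    integrable_inv_one_add_sq.comp_div hs.ne'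
  calc ∫ x : ℝ, studentTDensity ν x ^ 2
      ≤ ∫ x : ℝ, C ν ^ 2 * (1 + (x / Real.sqrt ν) ^ 2)⁻¹ :=
        integral_mono (sq_integrable hν hν1) (hint.const_mul _) key
  _ = C ν ^ 2 * (Real.sqrt ν * Real.pi) := by
      rw [MeasureTheory.integral_const_mul,
        MeasureTheory.Measure.integral_comp_div (fun x : ℝ => (1 + x ^ 2)⁻¹) (Real.sqrt ν),
        integral_univ_inv_one_add_sq, smul_eq_mul, abs_of_pos hs]

/-- Rescaled constant: `C ν = √ν * A ν`. -/
noncomputable def A (ν : ℝ) : ℝ :=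
  Real.Gamma ((ν + 1) / 2) / (2 * Real.sqrt Real.pi * Real.Gamma (ν / 2 + 1))

noncomputable def E (ν : ℝ) : ℝ := (ν / 5) ^ (ν / 2 : ℝ)

noncomputable def K (ν : ℝ) : ℝ :=
  E ν / (300 * Real.sqrt 5 * Real.pi ^ 2 * A ν ^ 3)

lemma A_pos {ν : ℝ} (hν : 0 < ν) : 0 < A ν :=
  div_pos (Real.Gamma_pos_of_pos (by linarith))
    (mul_pos (mul_pos two_pos (Real.sqrt_pos.mpr Real.pi_pos)) (Real.Gamma_pos_of_pos (by linarith)))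

lemma E_pos {ν : ℝ} (hν : 0 < ν) : 0 < E ν :=
  Real.rpow_pos_of_pos (by positivity) _

lemma K_pos {ν : ℝ} (hν : 0 < ν) : 0 < K ν :=
  div_pos (E_pos hν) (by
    have hA := A_pos hν
    have h5 : (0:ℝ) < Real.sqrt 5 := Real.sqrt_pos.mpr (by norm_num)
    positivity)

lemma C_eq {ν : ℝ} (hν : 0 < ν) : C ν = Real.sqrt ν * A ν := by
  unfold C A
  have hg : Real.Gamma (ν / 2 + 1) = ν / 2 * Real.Gamma (ν / 2) :=
    Real.Gamma_add_one (by positivity)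
  rw [Real.sqrt_mul hν.le, hg]
  have hsq : Real.sqrt ν * Real.sqrt ν = ν := Real.mul_self_sqrt hν.le
  have hs : Real.sqrt ν ≠ 0 := (Real.sqrt_pos.mpr hν).ne'
  have hsπ : Real.sqrt Real.pi ≠ 0 := (Real.sqrt_pos.mpr Real.pi_pos).ne'
  have hΓ2 : Real.Gamma (ν / 2) ≠ 0 := (Real.Gamma_pos_of_pos (by positivity)).ne'
  generalize Real.Gamma ((ν + 1) / 2) = Γ1
  generalize hG : Real.Gamma (ν / 2) = Γ2
  rw [hG] at hΓ2
  rw [← hsq]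
  field_simp
  simp only [Real.sqrt_mul_self (Real.sqrt_nonneg ν), Real.sqrt_sq (Real.sqrt_nonneg ν)]

lemma rpow_split {ν : ℝ} (hν : 0 < ν) :
    (5 / ν : ℝ) ^ (-((ν + 1) / 2)) = Real.sqrt ν / Real.sqrt 5 * E ν := by
  have h5ν : (0:ℝ) < 5 / ν := by positivity
  have hν5 : (0:ℝ) < ν / 5 := by positivity
  have h1 : (5 / ν : ℝ) ^ (-((ν + 1) / 2)) = (ν / 5) ^ ((ν + 1) / 2) := by
    rw [Real.rpow_neg h5ν.le, ← Real.inv_rpow h5ν.le, inv_div]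
  rw [h1, show ((ν + 1) / 2 : ℝ) = 1 / 2 + ν / 2 by ring, Real.rpow_add hν5,
    ← Real.sqrt_eq_rpow, Real.sqrt_div hν.le, E]

lemma lower_bound {ν : ℝ} (hν : 0 < ν) (hν1 : ν ≤ 1) : K ν * (ν⁻¹ * ν⁻¹) ≤ ARE ν := by
  have hfl := fisher_lb hν hν1
  have hDpos := sq_int_pos hν hν1
  have hDle := sq_int_le hν hν1
  have hNlb_pos : 0 < 1 / 25 * (C ν * (5 / ν) ^ (-((ν + 1) / 2))) := by
    have := Real.rpow_pos_of_pos (show (0:ℝ) < 5 / ν by positivity) (-((ν + 1) / 2))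
    have := C_pos (ν := ν) hν
    positivity
  have hDub_pos : 0 < C ν ^ 2 * (Real.sqrt ν * Real.pi) := by
    have := C_pos (ν := ν) hν
    have := Real.sqrt_pos.mpr hν
    positivity
  have hstep : 1 / 25 * (C ν * (5 / ν) ^ (-((ν + 1) / 2)))
        / (12 * (C ν ^ 2 * (Real.sqrt ν * Real.pi)) ^ 2) ≤ ARE ν := by
    unfold ARE
    refine div_le_div₀ (le_trans hNlb_pos.le hfl) hfl (by positivity) ?_
    have : (∫ x : ℝ, studentTDensity ν x ^ 2) ^ 2 ≤ (C ν ^ 2 * (Real.sqrt ν * Real.pi)) ^ 2 := by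
      exact pow_le_pow_left₀ hDpos.le hDle 2
    nlinarith
  refine le_trans (le_of_eq ?_) hstep
  rw [C_eq hν, rpow_split hν, K]
  have hsq : Real.sqrt ν * Real.sqrt ν = ν := Real.mul_self_sqrt hν.le
  have hs : (0:ℝ) < Real.sqrt ν := Real.sqrt_pos.mpr hν
  have hs5 : (0:ℝ) < Real.sqrt 5 := by positivity
  have hA := A_pos (ν := ν) hν
  have hE := E_pos (ν := ν) hν
  rw [← hsq]
  field_simp
  simp only [Real.sqrt_mul_self (Real.sqrt_nonneg ν), Real.sqrt_sq (Real.sqrt_nonneg ν)]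
  ring

lemma gamma_contAt {c : ℝ} (hc : 0 < c) : ContinuousAt Real.Gamma c :=
  (Real.differentiableAt_Gamma (fun m => by
    have h0 : (0:ℝ) ≤ (m : ℝ) := Nat.cast_nonneg m
    intro h
    rw [h] at hc
    linarith)).continuousAt

lemma A_tendsto : Tendsto A (nhdsWithin 0 (Set.Ioi (0:ℝ))) (nhds (1/2)) := by
  have t1 : Tendsto (fun ν : ℝ => (ν + 1) / 2) (nhdsWithin 0 (Set.Ioi (0:ℝ))) (nhds (1/2)) := by
    have h : Tendsto (fun ν : ℝ => (ν + 1) / 2) (nhds 0) (nhds ((0 + 1) / 2)) :=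
      ((continuous_id.add continuous_const).div_const 2).tendsto 0
    norm_num at h
    exact h.mono_left nhdsWithin_le_nhds
  have t2 : Tendsto (fun ν : ℝ => ν / 2 + 1) (nhdsWithin 0 (Set.Ioi (0:ℝ))) (nhds 1) := by
    have h : Tendsto (fun ν : ℝ => ν / 2 + 1) (nhds 0) (nhds ((0 : ℝ) / 2 + 1)) :=
      ((continuous_id.div_const 2).add continuous_const).tendsto 0
    norm_num at h
    exact h.mono_left nhdsWithin_le_nhds
  have hg1 : Tendsto (fun ν : ℝ => Real.Gamma ((ν + 1) / 2))
      (nhdsWithin 0 (Set.Ioi (0:ℝ))) (nhds (Real.sqrt Real.pi)) := by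
    have := (gamma_contAt (by norm_num : (0:ℝ) < 1/2)).tendsto.comp t1
    rwa [Real.Gamma_one_half_eq] at this
  have hg2 : Tendsto (fun ν : ℝ => Real.Gamma (ν / 2 + 1))
      (nhdsWithin 0 (Set.Ioi (0:ℝ))) (nhds 1) := by
    have := (gamma_contAt (by norm_num : (0:ℝ) < 1)).tendsto.comp t2
    rwa [Real.Gamma_one] at this
  have hd : Tendsto (fun ν : ℝ => 2 * Real.sqrt Real.pi * Real.Gamma (ν / 2 + 1))
      (nhdsWithin 0 (Set.Ioi (0:ℝ))) (nhds (2 * Real.sqrt Real.pi * 1)) :=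
    tendsto_const_nhds.mul hg2
  have hsπ : Real.sqrt Real.pi ≠ 0 := (Real.sqrt_pos.mpr Real.pi_pos).ne'
  have := hg1.div hd (by simpa using hsπ)
  have hval : Real.sqrt Real.pi / (2 * Real.sqrt Real.pi * 1) = 1 / 2 := by
    field_simp
  rwa [hval] at this

lemma E_tendsto : Tendsto E (nhdsWithin 0 (Set.Ioi (0:ℝ))) (nhds 1) := by
  have h1 : Tendsto (fun ν : ℝ => ν * Real.log ν) (nhdsWithin 0 (Set.Ioi (0:ℝ))) (nhds 0) := by
    have h := tendsto_log_mul_rpow_nhdsGT_zero (r := 1) zero_lt_one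
    refine h.congr' ?_
    filter_upwards [self_mem_nhdsWithin] with x hx
    rw [Real.rpow_one]; ring
  have hconst : Tendsto (fun ν : ℝ => ν * Real.log 5) (nhdsWithin 0 (Set.Ioi (0:ℝ))) (nhds 0) := by
    have h : Tendsto (fun ν : ℝ => ν * Real.log 5) (nhds 0) (nhds (0 * Real.log 5)) :=
      (continuous_id.mul continuous_const).tendsto 0
    norm_num at h
    exact h.mono_left nhdsWithin_le_nhds
  have h2 : Tendsto (fun ν : ℝ => Real.log (ν / 5) * (ν / 2))
      (nhdsWithin 0 (Set.Ioi (0:ℝ))) (nhds 0) := by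
    have h3 := (h1.sub hconst).div_const 2
    norm_num at h3
    refine h3.congr' ?_
    filter_upwards [self_mem_nhdsWithin] with ν hν
    rw [Real.log_div (ne_of_gt hν) (by norm_num)]
    ring
  have h4 : Tendsto (fun ν : ℝ => Real.exp (Real.log (ν / 5) * (ν / 2)))
      (nhdsWithin 0 (Set.Ioi (0:ℝ))) (nhds (Real.exp 0)) :=
    (Real.continuous_exp.tendsto 0).comp h2
  rw [Real.exp_zero] at h4
  refine h4.congr' ?_
  filter_upwards [self_mem_nhdsWithin] with ν hν
  rw [E, Real.rpow_def_of_pos (by simp only [Set.mem_Ioi] at hν; positivity)]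

lemma K_tendsto : Tendsto K (nhdsWithin 0 (Set.Ioi (0:ℝ)))
    (nhds (1 / (300 * Real.sqrt 5 * Real.pi ^ 2 * (1/2) ^ 3))) := by
  have h5 : (0:ℝ) < Real.sqrt 5 := Real.sqrt_pos.mpr (by norm_num)
  have hd : Tendsto (fun ν : ℝ => 300 * Real.sqrt 5 * Real.pi ^ 2 * A ν ^ 3)
      (nhdsWithin 0 (Set.Ioi (0:ℝ))) (nhds (300 * Real.sqrt 5 * Real.pi ^ 2 * (1/2) ^ 3)) :=
    tendsto_const_nhds.mul (A_tendsto.pow 3)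
  have hne : (300 * Real.sqrt 5 * Real.pi ^ 2 * ((1:ℝ)/2) ^ 3) ≠ 0 := by positivity
  have := E_tendsto.div hd hne
  exact this

lemma kval_pos : 0 < 1 / (300 * Real.sqrt 5 * Real.pi ^ 2 * ((1:ℝ)/2) ^ 3) := by
  have h5 : (0:ℝ) < Real.sqrt 5 := Real.sqrt_pos.mpr (by norm_num)
  positivity

end StudentAux

/-- Proposition S1 / Remark 2: the asymptotic relative efficiency of optimal-score GRR
with respect to Wilcoxon rank regression under Student `t_ν` noise tends to infinity
as `ν → 0⁺`. -/
theorem are_tendsto_atTop_as_dof_to_zero :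
    Tendsto ARE (nhdsWithin 0 (Set.Ioi (0:ℝ))) atTop := by
  open StudentAux in
  have hmono : ∀ᶠ ν in nhdsWithin 0 (Set.Ioi (0:ℝ)),
      StudentAux.K ν * (ν⁻¹ * ν⁻¹) ≤ ARE ν := by
    have hmem : Set.Ioo (0:ℝ) 1 ∈ nhdsWithin 0 (Set.Ioi (0:ℝ)) :=
      Ioo_mem_nhdsGT_of_mem (by constructor <;> norm_num)
    filter_upwards [hmem] with ν hν
    exact StudentAux.lower_bound hν.1 hν.2.le
  have hinv : Tendsto (fun ν : ℝ => ν⁻¹ * ν⁻¹) (nhdsWithin 0 (Set.Ioi (0:ℝ))) atTop :=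
    tendsto_inv_nhdsGT_zero.atTop_mul_atTop₀ tendsto_inv_nhdsGT_zero
  have hL : Tendsto (fun ν : ℝ => StudentAux.K ν * (ν⁻¹ * ν⁻¹))
      (nhdsWithin 0 (Set.Ioi (0:ℝ))) atTop :=
    Filter.Tendsto.pos_mul_atTop StudentAux.kval_pos StudentAux.K_tendsto hinv
  exact tendsto_atTop_mono' _ hmono hL
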